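/- For any prime p and integers n ≥ 0, k ≥ 0, r ≥ 1, we have C(n*p^r + k, k) ≡ C(n*p^{r-1} + ⌊k/p⌋, ⌊k/p⌋) (mod p^r). -/

import Mathlib

open Finset

private lemma key_identity (p : ℕ) (hp0 : 0 < p) (a : ℕ) : ∀ k : ℕ,
    (a * p + k).choose k * ∏ i ∈ (Finset.Icc 1 k).filter (fun i => ¬ p ∣ i), i
    = (a + k / p).choose (k / p) *
        ∏ i ∈ (Finset.Icc 1 k).filter (fun i => ¬ p ∣ i), (a * p + i) := by
  intro k
  induction k with
  | zero => simp
  | succ k ih =>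
    have hIcc : Finset.Icc 1 (k + 1) = insert (k + 1) (Finset.Icc 1 k) := by
      ext x; simp only [Finset.mem_Icc, Finset.mem_insert]; omega
    have hnot : (k + 1) ∉ Finset.Icc 1 k := by simp
    by_cases hd : p ∣ k + 1
    · -- filtered sets coincide
      have hfil : (Finset.Icc 1 (k + 1)).filter (fun i => ¬ p ∣ i)
          = (Finset.Icc 1 k).filter (fun i => ¬ p ∣ i) := by
        rw [hIcc, Finset.filter_insert, if_neg (by simpa using hd)]
      obtain ⟨j, hj⟩ := hd
      have hj0 : 0 < j := by
        rcases Nat.eq_zero_or_pos j with h | h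
        · subst h; simp at hj
        · exact h
      have hdiv : (k + 1) / p = j := by rw [hj, Nat.mul_div_cancel_left _ hp0]
      have hdivk : k / p = j - 1 := by
        have := Nat.succ_div_of_dvd (a := k) (b := p) ⟨j, hj⟩
        omega
      have h1 : (a * p + (k + 1)).choose (k + 1) * (k + 1)
          = (a * p + (k + 1)) * (a * p + k).choose k := by
        have := Nat.add_one_mul_choose_eq (a * p + k) k
        rw [show a * p + k + 1 = a * p + (k + 1) by omega] at this
        omega
      have h2 : (a + j).choose j * j = (a + j) * (a + (j - 1)).choose (j - 1) := by
        have := Nat.add_one_mul_choose_eq (a + (j - 1)) (j - 1)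
        rw [show a + (j - 1) + 1 = a + j by omega, show j - 1 + 1 = j by omega] at this
        omega
      have hfac : a * p + (k + 1) = (a + j) * p := by rw [hj]; ring
      rw [hfil]
      -- multiply both sides of goal by p * j and use cancellation
      have hpj : 0 < p * j := by positivity
      apply Nat.eq_of_mul_eq_mul_right hpj
      calc (a * p + (k + 1)).choose (k + 1) *
              (∏ i ∈ (Finset.Icc 1 k).filter (fun i => ¬ p ∣ i), i) * (p * j)
          = ((a * p + (k + 1)).choose (k + 1) * (k + 1)) *
              ∏ i ∈ (Finset.Icc 1 k).filter (fun i => ¬ p ∣ i), i := by rw [hj]; ring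
        _ = ((a + j) * p) * ((a * p + k).choose k *
              ∏ i ∈ (Finset.Icc 1 k).filter (fun i => ¬ p ∣ i), i) := by
              rw [h1, hfac]; ring
        _ = ((a + j) * p) * ((a + k / p).choose (k / p) *
              ∏ i ∈ (Finset.Icc 1 k).filter (fun i => ¬ p ∣ i), (a * p + i)) := by rw [ih]
        _ = ((a + j) * (a + (j-1)).choose (j-1)) * p *
              ∏ i ∈ (Finset.Icc 1 k).filter (fun i => ¬ p ∣ i), (a * p + i) := by
              rw [hdivk]; ring
        _ = (a + (k + 1) / p).choose ((k + 1) / p) *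
              (∏ i ∈ (Finset.Icc 1 k).filter (fun i => ¬ p ∣ i), (a * p + i)) * (p * j) := by
              rw [hdiv, ← h2]; ring
    · -- k+1 joins the filtered set
      have hfil : (Finset.Icc 1 (k + 1)).filter (fun i => ¬ p ∣ i)
          = insert (k + 1) ((Finset.Icc 1 k).filter (fun i => ¬ p ∣ i)) := by
        rw [hIcc, Finset.filter_insert, if_pos (by simpa using hd)]
      have hnot' : (k + 1) ∉ (Finset.Icc 1 k).filter (fun i => ¬ p ∣ i) := by
        simp
      have hdiv : (k + 1) / p = k / p := Nat.succ_div_of_not_dvd hd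
      have h1 : (a * p + (k + 1)).choose (k + 1) * (k + 1)
          = (a * p + (k + 1)) * (a * p + k).choose k := by
        have := Nat.add_one_mul_choose_eq (a * p + k) k
        rw [show a * p + k + 1 = a * p + (k + 1) by omega] at this
        omega
      rw [hfil, Finset.prod_insert hnot', Finset.prod_insert hnot', hdiv]
      apply Nat.eq_of_mul_eq_mul_right (show 0 < k + 1 by omega)
      calc (a * p + (k + 1)).choose (k + 1) *
              ((k + 1) * ∏ i ∈ (Finset.Icc 1 k).filter (fun i => ¬ p ∣ i), i) * (k + 1)
          = ((a * p + (k + 1)).choose (k + 1) * (k + 1)) *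
              (∏ i ∈ (Finset.Icc 1 k).filter (fun i => ¬ p ∣ i), i) * (k + 1) := by ring
        _ = (a * p + (k + 1)) * ((a * p + k).choose k *
              ∏ i ∈ (Finset.Icc 1 k).filter (fun i => ¬ p ∣ i), i) * (k + 1) := by
              rw [h1]; ring
        _ = (a * p + (k + 1)) * ((a + k / p).choose (k / p) *
              ∏ i ∈ (Finset.Icc 1 k).filter (fun i => ¬ p ∣ i), (a * p + i)) * (k + 1) := by
              rw [ih]
        _ = (a + k / p).choose (k / p) *
              ((a * p + (k + 1)) *
                ∏ i ∈ (Finset.Icc 1 k).filter (fun i => ¬ p ∣ i), (a * p + i)) * (k + 1) := by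
              ring

theorem choose_shift_ind (p : ℕ) (hp : p.Prime) (n k r : ℕ) (hr : 1 ≤ r) :
    (n * p ^ r + k).choose k ≡ (n * p ^ (r - 1) + k / p).choose (k / p) [MOD p ^ r] := by
  set a := n * p ^ (r - 1) with ha
  have hap : n * p ^ r = a * p := by
    rw [ha, mul_assoc, ← pow_succ]
    congr 2
    omega
  set S := (Finset.Icc 1 k).filter (fun i => ¬ p ∣ i) with hS
  have hkey : (n * p ^ r + k).choose k * ∏ i ∈ S, i
      = (a + k / p).choose (k / p) * ∏ i ∈ S, (n * p ^ r + i) := by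
    rw [hap]; exact key_identity p hp.pos a k
  -- product congruence
  have hprod : (∏ i ∈ S, (n * p ^ r + i)) ≡ (∏ i ∈ S, i) [MOD p ^ r] := by
    rw [← ZMod.natCast_eq_natCast_iff]
    push_cast
    refine Finset.prod_congr rfl fun i _ => ?_
    have : ((p : ZMod (p ^ r)) ^ r) = 0 := by
      rw [← Nat.cast_pow, ZMod.natCast_self]
    rw [this]
    ring
  have hA : Nat.Coprime (p ^ r) (∏ i ∈ S, i) := by
    apply Nat.Coprime.pow_left
    apply Nat.Coprime.prod_right
    intro i hi
    rw [hS, Finset.mem_filter] at hi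
    exact (Nat.Prime.coprime_iff_not_dvd hp).mpr hi.2
  have hmain : (n * p ^ r + k).choose k * (∏ i ∈ S, i)
      ≡ (a + k / p).choose (k / p) * (∏ i ∈ S, i) [MOD p ^ r] := by
    rw [hkey]
    exact Nat.ModEq.mul_left _ hprod
  exact Nat.ModEq.cancel_right_of_coprime hA hmain
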